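/- arXiv:2509.00197 — 2 statements merged into one kernel-verified Lean document; each statement's English description precedes it below -/
import Mathlib

section
/- Let H be a real inner product space, let A : H → H be a continuous linear map satisfying ⟨A x, x⟩ ≤ −‖x‖² for all x ∈ H, let β > 0 and C ≥ 0, and let q : [0,∞) → H be continuous with ‖q(t)‖ ≤ C·e^(−βt) for all t ≥ 0. If v : [0,∞) → H is differentiable and satisfies v′(t) = A v(t) + v(t) + q(t) for all t ≥ 0, then ‖v(t)‖ ≤ ‖v(0)‖ + C/β for all t ≥ 0. -/
open Filter Real RealInnerProductSpace

/-- Abstract energy estimate: if `A` satisfies the spectral bound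
`⟨Ax, x⟩ ≤ -‖x‖²`, `q` is continuous with `‖q(t)‖ ≤ C e^{-βt}` for `t ≥ 0`, and
`v` solves `v′ = Av + v + q` on `[0,∞)`, then `‖v(t)‖ ≤ ‖v(0)‖ + C/β`. -/
theorem energy_estimate {H : Type*} [NormedAddCommGroup H] [InnerProductSpace ℝ H]
    (A : H →L[ℝ] H) (hA : ∀ x : H, ⟪A x, x⟫ ≤ -‖x‖ ^ 2)
    (β C : ℝ) (hβ : 0 < β) (hC : 0 ≤ C)
    (q v : ℝ → H)
    (hq_cont : ContinuousOn q (Set.Ici 0))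
    (hq_bound : ∀ t : ℝ, 0 ≤ t → ‖q t‖ ≤ C * Real.exp (-β * t))
    (hv : ∀ t : ℝ, 0 ≤ t → HasDerivAt v (A (v t) + v t + q t) t) :
    ∀ t : ℝ, 0 ≤ t → ‖v t‖ ≤ ‖v 0‖ + C / β := by
  intro t ht
  have key : ∀ ε : ℝ, 0 < ε → ‖v t‖ ≤ ‖v 0‖ + ε + (C + ε) / β := by
    intro ε hε
    set B : ℝ → ℝ := fun s => ‖v 0‖ + ε + (C + ε) / β * (1 - Real.exp (-β * s)) with hBdef
    set B' : ℝ → ℝ := fun s => (C + ε) * Real.exp (-β * s) with hB'def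
    have hBderiv : ∀ s : ℝ, HasDerivAt B (B' s) s := by
      intro s
      have h1 : HasDerivAt (fun s : ℝ => Real.exp (-β * s)) (Real.exp (-β * s) * (-β)) s := by
        simpa using ((hasDerivAt_id s).const_mul (-β)).exp
      have h2 := ((h1.const_sub 1).const_mul ((C + ε) / β)).const_add (‖v 0‖ + ε)
      convert h2 using 1
      show (C + ε) * Real.exp (-β * s) = _
      field_simp
      all_goals rfl
    have main : ∀ x ∈ Set.Icc (0 : ℝ) t, ‖v x‖ ≤ B x := by
      apply image_norm_le_of_liminf_right_slope_norm_lt_deriv_boundary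
        (f := v) (f' := fun x => ‖q x‖) (B := B) (B' := B')
      · exact fun x hx => (hv x hx.1).continuousAt.continuousWithinAt
      · -- liminf slope bound
        intro x hx r hr
        rcases eq_or_ne (v x) 0 with h0 | h0
        · have hd : HasDerivAt v (q x) x := by simpa [h0] using hv x hx.1
          exact hd.hasDerivWithinAt.liminf_right_slope_norm_le (by rwa [show ‖q x‖ = ‖q x‖ from rfl])
        · set w : H := A (v x) + v x + q x with hw
          have hsq : HasDerivAt (fun s => ‖v s‖ ^ 2) (2 * ⟪v x, w⟫) x := (hv x hx.1).norm_sq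
          have hnx : ‖v x‖ ≠ 0 := norm_ne_zero_iff.mpr h0
          have hnx2 : ‖v x‖ ^ 2 ≠ 0 := pow_ne_zero _ hnx
          have hda : HasDerivAt (fun s => ‖v s‖) (⟪v x, w⟫ / ‖v x‖) x := by
            have h2 := hsq.sqrt hnx2
            have heq : (fun s : ℝ => Real.sqrt (‖v s‖ ^ 2)) = fun s => ‖v s‖ :=
              funext fun s => Real.sqrt_sq (norm_nonneg _)
            rw [heq, Real.sqrt_sq (norm_nonneg _)] at h2
            convert h2 using 1
            rw [mul_div_mul_left _ _ (two_ne_zero)]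
          have hdle : ⟪v x, w⟫ / ‖v x‖ ≤ ‖q x‖ := by
            have hinner : ⟪v x, w⟫ ≤ ‖v x‖ * ‖q x‖ := by
              have e1 : ⟪v x, w⟫ = ⟪v x, A (v x)⟫ + ⟪v x, v x⟫ + ⟪v x, q x⟫ := by
                rw [hw, inner_add_right, inner_add_right]
              have e2 : ⟪v x, A (v x)⟫ ≤ -‖v x‖ ^ 2 := by
                rw [real_inner_comm]; exact hA (v x)
              have e3 : ⟪v x, v x⟫ = ‖v x‖ ^ 2 := real_inner_self_eq_norm_sq (v x)
              have e4 : ⟪v x, q x⟫ ≤ ‖v x‖ * ‖q x‖ := real_inner_le_norm _ _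
              linarith
            rw [div_le_iff₀ (lt_of_le_of_ne (norm_nonneg _) (Ne.symm hnx))]
            calc ⟪v x, w⟫ ≤ ‖v x‖ * ‖q x‖ := hinner
              _ = ‖q x‖ * ‖v x‖ := by ring
          have hlt : ⟪v x, w⟫ / ‖v x‖ < r := lt_of_le_of_lt hdle hr
          have hev : ∀ᶠ z in nhdsWithin x {x}ᶜ, slope (fun s => ‖v s‖) x z < r :=
            ((hasDerivAt_iff_tendsto_slope.1 hda).eventually_lt_const hlt)
          have hev' : ∀ᶠ z in nhdsWithin x (Set.Ioi x), slope (norm ∘ v) x z < r :=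
            hev.filter_mono (nhdsWithin_mono x fun z hz => ne_of_gt hz)
          exact hev'.frequently
      · -- initial bound
        simp [hBdef]
        positivity
      · exact fun x _ => ((hBderiv x).continuousAt).continuousWithinAt
      · exact fun x _ => (hBderiv x).hasDerivWithinAt
      · -- strict bound at touching points
        intro x hx _
        have h1 : ‖q x‖ ≤ C * Real.exp (-β * x) := hq_bound x hx.1
        have h2 : C * Real.exp (-β * x) < (C + ε) * Real.exp (-β * x) :=
          mul_lt_mul_of_pos_right (by linarith) (Real.exp_pos _)
        exact lt_of_le_of_lt h1 h2
    have hBt : B t ≤ ‖v 0‖ + ε + (C + ε) / β := by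
      have h1 : (1 : ℝ) - Real.exp (-β * t) ≤ 1 := by
        have := (Real.exp_pos (-β * t)).le; linarith
      have h2 : 0 ≤ (C + ε) / β := by positivity
      have := mul_le_mul_of_nonneg_left h1 h2
      simp only [hBdef, mul_one] at *
      linarith
    exact le_trans (main t ⟨ht, le_refl t⟩) hBt
  apply le_of_forall_pos_le_add
  intro ε' hε'
  have hεpos : 0 < ε' * β / (β + 1) := by positivity
  have h := key (ε' * β / (β + 1)) hεpos
  have heq : ε' * β / (β + 1) + (C + ε' * β / (β + 1)) / β = C / β + ε' := by
    field_simp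
    ring
  linarith
end

section
/- Let K ≥ 0 and let g : [0,∞) → ℝ be continuous with |g(r)| ≤ K·e^(−r) for all r ≥ 0. If u : [0,∞) → ℝ is twice continuously differentiable, satisfies u″(r) − 2u′(r) + u(r) = g(r) for all r ≥ 0, and ∫₀^∞ e^(−2r)·u(r)² dr < ∞, then there is a constant K′ depending only on K such that |u(r)| ≤ K′·e^(−r) for all r ≥ 0. -/
open Filter Real Set MeasureTheory

lemma aux_integrable_tail (r : ℝ) (hr : 0 ≤ r) :
    MeasureTheory.IntegrableOn (fun s : ℝ => (s - r) * Real.exp (-2 * s)) (Set.Ioi r) := by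
  apply MeasureTheory.Integrable.mono' (g := fun s : ℝ => Real.exp (-s))
  · exact (by simpa using exp_neg_integrableOn_Ioi r (by norm_num : (0:ℝ) < 1) :
      IntegrableOn (fun s : ℝ => Real.exp (-s)) (Set.Ioi r))
  · exact (Continuous.aestronglyMeasurable (by continuity))
  · refine (ae_restrict_iff' measurableSet_Ioi).mpr (ae_of_all _ fun s hs => ?_)
    have hsr : r < s := hs
    have h0 : (0:ℝ) ≤ s - r := by linarith
    have hse : s ≤ Real.exp s := by linarith [Real.add_one_le_exp s]
    have h1 : (s - r) * Real.exp (-2 * s) ≤ Real.exp s * Real.exp (-2 * s) := by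
      apply mul_le_mul_of_nonneg_right _ (Real.exp_pos _).le
      linarith
    have h2 : Real.exp s * Real.exp (-2 * s) = Real.exp (-s) := by
      rw [← Real.exp_add]; ring_nf
    rw [Real.norm_eq_abs, abs_of_nonneg (by positivity)]
    linarith

lemma aux_tail_integral (r : ℝ) (hr : 0 ≤ r) :
    ∫ s in Set.Ioi r, (s - r) * Real.exp (-2 * s) = Real.exp (-2 * r) / 4 := by
  have hderiv : ∀ x ∈ Set.Ioi r, HasDerivAt
      (fun s => -((s - r) * Real.exp (-2 * s)) / 2 - Real.exp (-2 * s) / 4)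
      ((x - r) * Real.exp (-2 * x)) x := by
    intro x _
    have hlin : HasDerivAt (fun s : ℝ => (-2 : ℝ) * s) (-2) x := by
      simpa using (hasDerivAt_id x).const_mul (-2 : ℝ)
    have he : HasDerivAt (fun s : ℝ => Real.exp (-2 * s)) (Real.exp (-2 * x) * (-2)) x :=
      hlin.exp
    have h1 : HasDerivAt (fun s : ℝ => (s - r) * Real.exp (-2 * s))
        (1 * Real.exp (-2 * x) + (x - r) * (Real.exp (-2 * x) * (-2))) x :=
      ((hasDerivAt_id x).sub_const r).mul he
    have := ((h1.fun_neg.div_const 2).fun_sub (he.div_const 4))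
    refine this.congr_deriv ?_
    ring
  have htend : Tendsto (fun s : ℝ => -((s - r) * Real.exp (-2 * s)) / 2 - Real.exp (-2 * s) / 4)
      atTop (nhds 0) := by
    have h1 : Tendsto (fun x : ℝ => x * Real.exp (-x)) atTop (nhds 0) := by
      simpa using tendsto_pow_mul_exp_neg_atTop_nhds_zero 1
    have h2 : Tendsto (fun x : ℝ => Real.exp (-x)) atTop (nhds 0) :=
      Real.tendsto_exp_neg_atTop_nhds_zero
    have key : Tendsto (fun s : ℝ =>
        -((s * Real.exp (-s)) * Real.exp (-s) - r * (Real.exp (-s) * Real.exp (-s))) / 2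
          - (Real.exp (-s) * Real.exp (-s)) / 4) atTop (nhds 0) := by
      have := (((h1.mul h2).sub ((h2.mul h2).const_mul r)).neg.div_const 2).sub
        ((h2.mul h2).div_const 4)
      simpa using this
    refine key.congr fun s => ?_
    have h3 : Real.exp (-s) * Real.exp (-s) = Real.exp (-2 * s) := by
      rw [← Real.exp_add]; ring_nf
    rw [← h3]; ring
  have := MeasureTheory.integral_Ioi_of_hasDerivAt_of_tendsto
    (f := fun s => -((s - r) * Real.exp (-2 * s)) / 2 - Real.exp (-2 * s) / 4)
    (f' := fun s => (s - r) * Real.exp (-2 * s)) (a := r)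
    (Continuous.continuousWithinAt (by continuity)) hderiv (aux_integrable_tail r hr) htend
  rw [this]; simp

lemma aux_affine (α β : ℝ)
    (h : MeasureTheory.IntegrableOn (fun r : ℝ => (α + β * r) ^ 2) (Set.Ici 0)) :
    α = 0 ∧ β = 0 := by
  by_contra hc
  obtain ⟨R, hR0, ε, hε, hbound⟩ :
      ∃ R : ℝ, 0 ≤ R ∧ ∃ ε : ℝ, 0 < ε ∧ ∀ r, R ≤ r → ε ≤ (α + β * r) ^ 2 := by
    by_cases hβ : β = 0
    · have hα : α ≠ 0 := by
        intro hα; exact hc ⟨hα, hβ⟩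
      exact ⟨0, le_refl 0, α ^ 2, by positivity, fun r _ => by simp [hβ]⟩
    · refine ⟨(|α| + 1) / |β|, by positivity, 1, one_pos, fun r hr => ?_⟩
      have hβ' : 0 < |β| := abs_pos.mpr hβ
      have h1 : |α| + 1 ≤ r * |β| := (div_le_iff₀ hβ').mp hr
      have h2 : |β * r| - |α| ≤ |β * r + α| := by
        have := abs_sub_abs_le_abs_sub (β * r) (-α)
        simpa using this
      have hr0 : (0:ℝ) ≤ r := le_trans (by positivity) hr
      have h3 : 1 ≤ |β * r + α| := by
        rw [abs_mul, abs_of_nonneg hr0] at h2; nlinarith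
      nlinarith [sq_abs (β * r + α), abs_nonneg (β * r + α),
        sq_nonneg (|β * r + α| - 1)]
  have hlt := h.measure_ge_lt_top hε
  have hsub : Set.Ici R ⊆ {a | ε ≤ (α + β * a) ^ 2} := fun r hr => hbound r hr
  have hmeas : (volume.restrict (Set.Ici 0)) (Set.Ici R) = ⊤ := by
    rw [Measure.restrict_apply measurableSet_Ici]
    have : Set.Ici R ∩ Set.Ici (0:ℝ) = Set.Ici R := by
      rw [Set.inter_eq_left]; exact Set.Ici_subset_Ici.mpr hR0
    rw [this, Real.volume_Ici]
  have : (⊤ : ENNReal) ≤ (volume.restrict (Set.Ici 0)) {a | ε ≤ (α + β * a) ^ 2} := by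
    rw [← hmeas]; exact measure_mono hsub
  exact absurd (lt_of_le_of_lt this hlt) (lt_irrefl _)

lemma aux_main (K : ℝ) (hK : 0 ≤ K) (h v v' : ℝ → ℝ)
    (hhc : ContinuousOn h (Set.Ici 0))
    (hhb : ∀ s : ℝ, 0 ≤ s → |h s| ≤ K * Real.exp (-2 * s))
    (hv : ∀ r : ℝ, 0 ≤ r → HasDerivWithinAt v (v' r) (Set.Ici 0) r)
    (hv' : ∀ r : ℝ, 0 ≤ r → HasDerivWithinAt v' (h r) (Set.Ici 0) r)
    (hint : MeasureTheory.IntegrableOn (fun r : ℝ => (v r) ^ 2) (Set.Ici 0)) :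
    ∀ r : ℝ, 0 ≤ r → |v r| ≤ K / 4 * Real.exp (-2 * r) := by
  have hvcont : ContinuousOn v (Set.Ici 0) := fun r hr => (hv r hr).continuousWithinAt
  have hv'cont : ContinuousOn v' (Set.Ici 0) := fun r hr => (hv' r hr).continuousWithinAt
  have hvD : ∀ x : ℝ, 0 < x → HasDerivAt v (v' x) x := fun x hx =>
    (hv x hx.le).hasDerivAt (Ici_mem_nhds hx)
  have hv'D : ∀ x : ℝ, 0 < x → HasDerivAt v' (h x) x := fun x hx =>
    (hv' x hx.le).hasDerivAt (Ici_mem_nhds hx)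
  -- integrability of h and s * h s on (0, ∞)
  have hInt1 : MeasureTheory.IntegrableOn h (Set.Ioi 0) := by
    apply MeasureTheory.Integrable.mono' (g := fun s : ℝ => K * Real.exp (-2 * s))
    · exact (exp_neg_integrableOn_Ioi 0 (by norm_num : (0:ℝ) < 2)).const_mul K
    · exact ((hhc.mono (fun x hx => le_of_lt hx)).aestronglyMeasurable measurableSet_Ioi)
    · exact (ae_restrict_iff' measurableSet_Ioi).mpr (ae_of_all _ fun s hs => by
        simpa [Real.norm_eq_abs] using hhb s (le_of_lt hs))
  have hInt2 : MeasureTheory.IntegrableOn (fun s => s * h s) (Set.Ioi 0) := by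
    apply MeasureTheory.Integrable.mono' (g := fun s : ℝ => K * Real.exp (-s))
    · have := (exp_neg_integrableOn_Ioi 0 (by norm_num : (0:ℝ) < 1)).const_mul K
      simpa using this
    · exact ((continuousOn_id.mul (hhc.mono (fun x hx => le_of_lt hx))).aestronglyMeasurable
        measurableSet_Ioi)
    · refine (ae_restrict_iff' measurableSet_Ioi).mpr (ae_of_all _ fun s hs => ?_)
      have hs0 : (0:ℝ) < s := hs
      have h1 : |s * h s| = s * |h s| := by rw [abs_mul, abs_of_pos hs0]
      have h2 : s * |h s| ≤ s * (K * Real.exp (-2 * s)) :=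
        mul_le_mul_of_nonneg_left (hhb s hs0.le) hs0.le
      have hse : s ≤ Real.exp s := by linarith [Real.add_one_le_exp s]
      have h3 : s * Real.exp (-2 * s) ≤ Real.exp (-s) := by
        have h4 := mul_le_mul_of_nonneg_right hse (Real.exp_pos (-2 * s)).le
        have h5 : Real.exp s * Real.exp (-2 * s) = Real.exp (-s) := by
          rw [← Real.exp_add]; ring_nf
        linarith
      rw [Real.norm_eq_abs, h1]
      calc s * |h s| ≤ s * (K * Real.exp (-2 * s)) := h2
        _ = K * (s * Real.exp (-2 * s)) := by ring
        _ ≤ K * Real.exp (-s) := mul_le_mul_of_nonneg_left h3 hK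
  -- Taylor formula with integral remainder
  have taylor : ∀ r : ℝ, 0 ≤ r →
      v r = v 0 + v' 0 * r + ∫ s in (0:ℝ)..r, (r - s) * h s := by
    intro r hr
    have hIcc : Set.Icc (0:ℝ) r ⊆ Set.Ici 0 := Set.Icc_subset_Ici_self
    have key : (∫ s in (0:ℝ)..r, (r - s) * h s)
        = (v r + (r - r) * v' r) - (v 0 + (r - 0) * v' 0) := by
      apply intervalIntegral.integral_eq_sub_of_hasDeriv_right_of_le
        (f := fun s => v s + (r - s) * v' s) (f' := fun s => (r - s) * h s) hr
      · exact (hvcont.mono hIcc).add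
          ((continuousOn_const.sub continuousOn_id).mul (hv'cont.mono hIcc))
      · intro x hx
        have hD : HasDerivAt (fun s => v s + (r - s) * v' s) ((r - x) * h x) x := by
          have h1 := ((hasDerivAt_id x).const_sub r).fun_mul (hv'D x hx.1)
          have h2 := (hvD x hx.1).fun_add h1
          refine h2.congr_deriv ?_
          simp only [id_eq]
          ring
        exact hD.hasDerivWithinAt
      · apply ContinuousOn.intervalIntegrable
        rw [Set.uIcc_of_le hr]
        exact (continuousOn_const.sub continuousOn_id).mul (hhc.mono hIcc)
    rw [key]; ring
  -- splitting the remainder integral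
  have hIntr : ∀ r : ℝ, MeasureTheory.IntegrableOn (fun s => (r - s) * h s) (Set.Ioi 0) := by
    intro r
    have heq : (fun s : ℝ => (r - s) * h s) = fun s => r * h s - s * h s := by
      funext s; ring
    rw [heq]
    exact (hInt1.const_mul r).sub hInt2
  have split : ∀ r : ℝ, 0 ≤ r →
      (∫ s in (0:ℝ)..r, (r - s) * h s)
        = (r * (∫ s in Set.Ioi (0:ℝ), h s) - ∫ s in Set.Ioi (0:ℝ), s * h s)
          - ∫ s in Set.Ioi r, (r - s) * h s := by
    intro r hr
    have hdis : Disjoint (Set.Ioc (0:ℝ) r) (Set.Ioi r) := Set.Ioc_disjoint_Ioi le_rfl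
    have hun : Set.Ioc (0:ℝ) r ∪ Set.Ioi r = Set.Ioi 0 := Set.Ioc_union_Ioi_eq_Ioi hr
    have hIoc : MeasureTheory.IntegrableOn (fun s => (r - s) * h s) (Set.Ioc 0 r) :=
      (hIntr r).mono_set Set.Ioc_subset_Ioi_self
    have hIoi : MeasureTheory.IntegrableOn (fun s => (r - s) * h s) (Set.Ioi r) :=
      (hIntr r).mono_set (Set.Ioi_subset_Ioi hr)
    have hu := MeasureTheory.setIntegral_union hdis measurableSet_Ioi hIoc hIoi
      (f := fun s => (r - s) * h s) (μ := volume)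
    rw [hun] at hu
    have hfull : (∫ s in Set.Ioi (0:ℝ), (r - s) * h s)
        = r * (∫ s in Set.Ioi (0:ℝ), h s) - ∫ s in Set.Ioi (0:ℝ), s * h s := by
      have heq : (fun s : ℝ => (r - s) * h s) = fun s => r * h s - s * h s := by
        funext s; ring
      rw [heq, MeasureTheory.integral_sub (hInt1.const_mul r) hInt2,
        MeasureTheory.integral_const_mul]
    rw [intervalIntegral.integral_of_le hr]
    rw [hfull] at hu
    linarith
  -- representation v r = α + β r + ρ r
  set C₁ : ℝ := ∫ s in Set.Ioi (0:ℝ), h s with hC1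
  set C₂ : ℝ := ∫ s in Set.Ioi (0:ℝ), s * h s with hC2
  set α : ℝ := v 0 - C₂ with hα
  set β : ℝ := v' 0 + C₁ with hβ
  have rep : ∀ r : ℝ, 0 ≤ r →
      v r - (α + β * r) = ∫ s in Set.Ioi r, (s - r) * h s := by
    intro r hr
    have h3 : (∫ s in Set.Ioi r, (s - r) * h s)
        = -∫ s in Set.Ioi r, (r - s) * h s := by
      rw [← MeasureTheory.integral_neg]
      congr 1; funext s; ring
    rw [h3, taylor r hr, split r hr, hα, hβ]
    ring
  -- bound on the remainder
  have rhob : ∀ r : ℝ, 0 ≤ r →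
      |∫ s in Set.Ioi r, (s - r) * h s| ≤ K / 4 * Real.exp (-2 * r) := by
    intro r hr
    have hg : MeasureTheory.Integrable (fun s => K * ((s - r) * Real.exp (-2 * s)))
        (volume.restrict (Set.Ioi r)) := (aux_integrable_tail r hr).const_mul K
    have hb : ∀ᵐ s ∂(volume.restrict (Set.Ioi r)),
        ‖(s - r) * h s‖ ≤ K * ((s - r) * Real.exp (-2 * s)) := by
      refine (ae_restrict_iff' measurableSet_Ioi).mpr (ae_of_all _ fun s hs => ?_)
      have hrs : r < s := hs
      have h0 : (0:ℝ) ≤ s - r := by linarith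
      rw [Real.norm_eq_abs, abs_mul, abs_of_nonneg h0]
      calc (s - r) * |h s| ≤ (s - r) * (K * Real.exp (-2 * s)) :=
            mul_le_mul_of_nonneg_left (hhb s (by linarith)) h0
        _ = K * ((s - r) * Real.exp (-2 * s)) := by ring
    have hle := MeasureTheory.norm_integral_le_of_norm_le hg hb
    rw [Real.norm_eq_abs] at hle
    calc |∫ s in Set.Ioi r, (s - r) * h s|
        ≤ ∫ s in Set.Ioi r, K * ((s - r) * Real.exp (-2 * s)) := hle
      _ = K * (Real.exp (-2 * r) / 4) := by
          rw [MeasureTheory.integral_const_mul, aux_tail_integral r hr]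
      _ = K / 4 * Real.exp (-2 * r) := by ring
  -- L² of remainder
  have haffc : Continuous fun r : ℝ => α + β * r :=
    continuous_const.add (continuous_const.mul continuous_id)
  have hrho2 : MeasureTheory.IntegrableOn
      (fun r : ℝ => (v r - (α + β * r)) ^ 2) (Set.Ici 0) := by
    apply MeasureTheory.Integrable.mono' (g := fun r : ℝ => (K / 4) ^ 2 * Real.exp (-4 * r))
    · exact ((integrableOn_Ici_iff_integrableOn_Ioi).mpr
        (exp_neg_integrableOn_Ioi 0 (by norm_num : (0:ℝ) < 4))).const_mul _
    · exact (((hvcont.sub haffc.continuousOn).pow 2).aestronglyMeasurable measurableSet_Ici)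
    · refine (ae_restrict_iff' measurableSet_Ici).mpr (ae_of_all _ fun r hr => ?_)
      have h1 := rep r hr
      have h2 := rhob r hr
      have h3 : |v r - (α + β * r)| ≤ K / 4 * Real.exp (-2 * r) := by rw [h1]; exact h2
      have hKe : (0:ℝ) ≤ K / 4 * Real.exp (-2 * r) := by positivity
      have h4 : (v r - (α + β * r)) ^ 2 ≤ (K / 4 * Real.exp (-2 * r)) ^ 2 := by
        have h6 := mul_le_mul h3 h3 (abs_nonneg _) hKe
        calc (v r - (α + β * r)) ^ 2
            = |v r - (α + β * r)| * |v r - (α + β * r)| := by rw [← sq_abs]; ring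
          _ ≤ (K / 4 * Real.exp (-2 * r)) * (K / 4 * Real.exp (-2 * r)) := h6
          _ = (K / 4 * Real.exp (-2 * r)) ^ 2 := by ring
      have h5 : Real.exp (-2 * r) * Real.exp (-2 * r) = Real.exp (-4 * r) := by
        rw [← Real.exp_add]; ring_nf
      rw [Real.norm_eq_abs, abs_of_nonneg (sq_nonneg _)]
      calc (v r - (α + β * r)) ^ 2 ≤ (K / 4 * Real.exp (-2 * r)) ^ 2 := h4
        _ = (K / 4) ^ 2 * (Real.exp (-2 * r) * Real.exp (-2 * r)) := by ring
        _ = (K / 4) ^ 2 * Real.exp (-4 * r) := by rw [h5]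
  -- L² of the affine part, hence it vanishes
  have hL2 : MeasureTheory.IntegrableOn (fun r : ℝ => (α + β * r) ^ 2) (Set.Ici 0) := by
    apply MeasureTheory.Integrable.mono'
      (g := fun r : ℝ => 2 * (v r) ^ 2 + 2 * (v r - (α + β * r)) ^ 2)
    · exact (hint.const_mul 2).add (hrho2.const_mul 2)
    · exact (haffc.pow 2).aestronglyMeasurable.restrict
    · refine ae_of_all _ fun r => ?_
      rw [Real.norm_eq_abs, abs_of_nonneg (sq_nonneg _)]
      nlinarith [sq_nonneg (v r + (v r - (α + β * r)))]
  obtain ⟨hα0, hβ0⟩ := aux_affine α β hL2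
  -- conclusion
  intro r hr
  have h1 : v r = ∫ s in Set.Ioi r, (s - r) * h s := by
    have := rep r hr
    rw [hα0, hβ0] at this
    simpa using this
  rw [h1]
  exact rhob r hr

/-- Inhomogeneous double-root ODE: for `K ≥ 0` there is `K′` (depending only on
`K`) such that any C² solution on `[0,∞)` of `u″ - 2u′ + u = g` with
`|g(r)| ≤ K e^{-r}` and `∫₀^∞ e^{-2r} u(r)² dr < ∞` satisfies
`|u(r)| ≤ K′ e^{-r}`. -/
theorem ode_decay_inhomogeneous (K : ℝ) (hK : 0 ≤ K) :
    ∃ K' : ℝ, ∀ g u u' u'' : ℝ → ℝ,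
      ContinuousOn g (Set.Ici 0) →
      (∀ r : ℝ, 0 ≤ r → |g r| ≤ K * Real.exp (-r)) →
      (∀ r : ℝ, 0 ≤ r → HasDerivWithinAt u (u' r) (Set.Ici 0) r) →
      (∀ r : ℝ, 0 ≤ r → HasDerivWithinAt u' (u'' r) (Set.Ici 0) r) →
      ContinuousOn u'' (Set.Ici 0) →
      (∀ r : ℝ, 0 ≤ r → u'' r - 2 * u' r + u r = g r) →
      MeasureTheory.IntegrableOn (fun r : ℝ => Real.exp (-2 * r) * (u r) ^ 2)
        (Set.Ici 0) →
      ∀ r : ℝ, 0 ≤ r → |u r| ≤ K' * Real.exp (-r) := by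
  refine ⟨K / 4, ?_⟩
  intro g u u' u'' hgc hgb hu hu' hu''c hode hint
  have hexpc : Continuous fun r : ℝ => Real.exp (-r) := by continuity
  have hexpD : ∀ x : ℝ, HasDerivAt (fun s : ℝ => Real.exp (-s)) (-Real.exp (-x)) x := by
    intro x
    have h1 : HasDerivAt (fun s : ℝ => -s) (-1) x := (hasDerivAt_id x).neg
    have := h1.exp
    simpa using this
  have e2 : ∀ r : ℝ, Real.exp (-r) * Real.exp (-r) = Real.exp (-2 * r) := by
    intro r; rw [← Real.exp_add]; ring_nf
  have key := aux_main K hK (fun r => Real.exp (-r) * g r)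
      (fun r => Real.exp (-r) * u r) (fun r => Real.exp (-r) * (u' r - u r))
      (hexpc.continuousOn.mul hgc)
      (by
        intro s hs
        rw [abs_mul, abs_of_pos (Real.exp_pos _)]
        calc Real.exp (-s) * |g s| ≤ Real.exp (-s) * (K * Real.exp (-s)) :=
              mul_le_mul_of_nonneg_left (hgb s hs) (Real.exp_pos _).le
          _ = K * (Real.exp (-s) * Real.exp (-s)) := by ring
          _ = K * Real.exp (-2 * s) := by rw [e2 s])
      (by
        intro r hr
        have h1 := ((hexpD r).hasDerivWithinAt (s := Set.Ici 0)).fun_mul (hu r hr)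
        refine h1.congr_deriv ?_
        ring)
      (by
        intro r hr
        have h1 := ((hexpD r).hasDerivWithinAt (s := Set.Ici 0)).fun_mul
          ((hu' r hr).fun_sub (hu r hr))
        refine h1.congr_deriv ?_
        show _ = Real.exp (-r) * g r
        rw [← hode r hr]
        ring)
      (by
        have heq : (fun r : ℝ => (Real.exp (-r) * u r) ^ 2)
            = fun r : ℝ => Real.exp (-2 * r) * (u r) ^ 2 := by
          funext r
          calc (Real.exp (-r) * u r) ^ 2
              = (Real.exp (-r) * Real.exp (-r)) * (u r) ^ 2 := by ring
            _ = Real.exp (-2 * r) * (u r) ^ 2 := by rw [e2 r]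
        rw [heq]
        exact hint)
  intro r hr
  have h1 := key r hr
  rw [abs_mul, abs_of_pos (Real.exp_pos _)] at h1
  have hpos := Real.exp_pos (-r)
  have h3 : Real.exp (-r) * |u r| ≤ Real.exp (-r) * (K / 4 * Real.exp (-r)) := by
    rw [← e2 r] at h1
    linarith
  have := (mul_le_mul_iff_right₀ hpos).mp h3
  linarith
end
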